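/- Assume Assumption (F), let H : [0,∞) → (0,∞) satisfy ∫_ℝ F(e^{√y t}/H(y)) dN(t) = 0 for all y ≥ 0 (N the standard Gaussian (normal N(0,1)) probability measure on ℝ), and let G(y) = H(y)·∫_ℝ e^{√y t} F'(e^{√y t}/H(y)) dN(t) / (−∫_ℝ e^{2√y t} F''(e^{√y t}/H(y)) dN(t)). If there exists c > 0 such that −x F''(x)/F'(x) ≥ c for all x > 0, then G(y) ≤ 1/c for all y ≥ 0. -/
import Mathlib


open MeasureTheory ProbabilityTheory Set

/-- Remark 4.1 of the paper: if the index of relative risk aversion of `F` is bounded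
below by `c > 0`, then `G ≤ 1/c`. -/
theorem stmt_6 (F F' F'' : ℝ → ℝ)
    (hdF : ∀ x > (0:ℝ), HasDerivAt F (F' x) x)
    (hdF' : ∀ x > (0:ℝ), HasDerivAt F' (F'' x) x)
    (hF''cont : ContinuousOn F'' (Ioi 0))
    (hF1 : F 1 = 0)
    (hF'pos : ∀ x > (0:ℝ), 0 < F' x)
    (hF''neg : ∀ x > (0:ℝ), F'' x < 0)
    (hgrowth : ∃ L : ℝ, 0 < L ∧ ∃ γ : ℝ, 0 < γ ∧ ∀ x > (0:ℝ),
      |F x| + |F' x| + |F'' x| ≤ L * (1 + x ^ γ + x ^ (-γ)))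
    (H : ℝ → ℝ)
    (hHpos : ∀ y ∈ Ici (0:ℝ), 0 < H y)
    (hHroot : ∀ y ∈ Ici (0:ℝ),
      (∫ t, F (Real.exp (Real.sqrt y * t) / H y) ∂(gaussianReal 0 1)) = 0)
    (c : ℝ) (hc : 0 < c)
    (hRRA : ∀ x > (0:ℝ), c ≤ -(x * F'' x) / F' x) :
    ∀ y ∈ Ici (0:ℝ),
      H y * (∫ t, Real.exp (Real.sqrt y * t) *
          F' (Real.exp (Real.sqrt y * t) / H y) ∂(gaussianReal 0 1)) /
        (-(∫ t, Real.exp (2 * Real.sqrt y * t) *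
          F'' (Real.exp (Real.sqrt y * t) / H y) ∂(gaussianReal 0 1))) ≤ 1 / c := by
  intro y hy
  have hH := hHpos y hy
  set μ := gaussianReal (0:ℝ) 1 with hμ
  set f : ℝ → ℝ := fun t =>
    Real.exp (Real.sqrt y * t) * F' (Real.exp (Real.sqrt y * t) / H y) with hf
  set g : ℝ → ℝ := fun t =>
    Real.exp (2 * Real.sqrt y * t) * F'' (Real.exp (Real.sqrt y * t) / H y) with hg
  have hx : ∀ t : ℝ, 0 < Real.exp (Real.sqrt y * t) / H y :=
    fun t => div_pos (Real.exp_pos _) hH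
  -- key pointwise inequality
  have hkey : ∀ t : ℝ, c * (H y * f t) ≤ -g t := by
    intro t
    have he2 : Real.exp (2 * Real.sqrt y * t)
        = Real.exp (Real.sqrt y * t) * Real.exp (Real.sqrt y * t) := by
      rw [← Real.exp_add]; ring_nf
    simp only [hf, hg, he2]
    set e := Real.exp (Real.sqrt y * t) with he
    set X := e / H y with hX
    have hXpos := hx t
    have hF' := hF'pos _ hXpos
    have h1 : c * F' X ≤ -(X * F'' X) := by
      have h := hRRA _ hXpos
      rwa [le_div_iff₀ hF'] at h
    have hXe : X * H y = e := div_mul_cancel₀ _ hH.ne'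
    have h2 := mul_le_mul_of_nonneg_left h1 (mul_pos hH (Real.exp_pos (Real.sqrt y * t))).le
    calc c * (H y * (e * F' X)) = (H y * e) * (c * F' X) := by ring
      _ ≤ (H y * e) * (-(X * F'' X)) := h2
      _ = -((X * H y) * e * F'' X) := by ring
      _ = -(e * e * F'' X) := by rw [hXe]
  by_cases hI : (∫ t, g t ∂μ) = 0
  · rw [hI, neg_zero, div_zero]
    positivity
  · have hgint : Integrable g μ := by
      by_contra h; exact hI (integral_undef h)
    have hIneg : (∫ t, g t ∂μ) ≤ 0 := by
      refine integral_nonpos fun t => ?_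
      exact mul_nonpos_of_nonneg_of_nonpos (Real.exp_pos _).le (hF''neg _ (hx t)).le
    have hD : 0 < -(∫ t, g t ∂μ) := neg_pos.mpr (lt_of_le_of_ne hIneg hI)
    by_cases hfint : Integrable f μ
    · have hmono : (∫ t, c * (H y * f t) ∂μ) ≤ ∫ t, -g t ∂μ :=
        integral_mono ((hfint.const_mul (H y)).const_mul c) hgint.neg hkey
      rw [integral_neg] at hmono
      have hval : (∫ t, c * (H y * f t) ∂μ) = c * (H y * ∫ t, f t ∂μ) := by
        rw [integral_const_mul, integral_const_mul]
      rw [hval] at hmono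
      rw [div_le_div_iff₀ hD hc]
      linarith
    · rw [integral_undef hfint, mul_zero, zero_div]
      positivity
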